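/- arXiv:0912.0441 — 2 statements merged into one kernel-verified Lean document; each statement's English description precedes it below -/
import Mathlib

section
/- Vitali's convergence theorem: Let (f_n) be a sequence of functions holomorphic on a domain D ⊆ ℂ, uniformly bounded by some M on D. If f_n(s) converges at every point of a subset S ⊆ D that has a limit point in D, then f_n converges uniformly on every closed disk contained in D to a function holomorphic on D. -/
open Filter Topology
open Metric


noncomputable def iterDslope (f : ℂ → ℂ) (c : ℂ) : ℕ → ℂ → ℂ
  | 0 => f
  | (k+1) => dslope (iterDslope f c k) c

lemma iterDslope_step (f : ℂ → ℂ) (c z : ℂ) (k : ℕ) :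
    iterDslope f c k z = iterDslope f c k c + (z - c) * iterDslope f c (k+1) z := by
  have h := sub_smul_dslope (iterDslope f c k) c z
  simp only [smul_eq_mul] at h
  simp only [iterDslope]
  linear_combination -h

lemma iterDslope_diff (f : ℂ → ℂ) (c : ℂ) (R : ℝ) (hR : 0 < R) (k : ℕ)
    (hf : DifferentiableOn ℂ f (ball c R)) :
    DifferentiableOn ℂ (iterDslope f c k) (ball c R) := by
  induction k with
  | zero => exact hf
  | succ k ih => exact (Complex.differentiableOn_dslope (ball_mem_nhds c hR)).mpr ih

lemma iterDslope_bound (f : ℂ → ℂ) (c : ℂ) (R r M : ℝ) (hr : 0 < r) (hrR : r < R)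
    (hf : DifferentiableOn ℂ f (ball c R))
    (hbd : ∀ z ∈ ball c R, ‖f z‖ ≤ M) (k : ℕ) :
    ∀ z ∈ closedBall c r, ‖iterDslope f c k z‖ ≤ M * (2/r)^k := by
  have hR : 0 < R := hr.trans hrR
  induction k with
  | zero =>
    intro z hz
    simpa [iterDslope] using hbd z ((closedBall_subset_ball hrR) hz)
  | succ k ih =>
    intro z hz
    have hz' : z ∈ closure (ball c r) := by rwa [closure_ball c hr.ne']
    have hdiff : DiffContOnCl ℂ (iterDslope f c (k+1)) (ball c r) :=
      ⟨(iterDslope_diff f c R hR (k+1) hf).mono (ball_subset_ball hrR.le),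
       ((iterDslope_diff f c R hR (k+1) hf).continuousOn).mono
        (by rw [closure_ball c hr.ne']; exact closedBall_subset_ball hrR)⟩
    refine Complex.norm_le_of_forall_mem_frontier_norm_le isBounded_ball hdiff ?_ hz'
    intro w hw
    rw [frontier_ball c hr.ne'] at hw
    have hwc : w ≠ c := by
      intro h; rw [h] at hw; simp [mem_sphere_iff_norm] at hw; exact hr.ne' hw.symm
    have : iterDslope f c (k+1) w = (w - c)⁻¹ * (iterDslope f c k w - iterDslope f c k c) := by
      simp only [iterDslope, dslope_of_ne _ hwc, slope_def_field]
      field_simp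
    rw [this, norm_mul, norm_inv]
    have hwn : ‖w - c‖ = r := by rwa [mem_sphere_iff_norm] at hw
    rw [hwn]
    have h1 : ‖iterDslope f c k w - iterDslope f c k c‖ ≤ M * (2/r)^k + M * (2/r)^k := by
      refine (norm_sub_le _ _).trans (add_le_add ?_ ?_)
      · exact ih w (by rw [mem_closedBall, dist_eq_norm, hwn])
      · exact ih c (mem_closedBall_self hr.le)
    calc r⁻¹ * ‖iterDslope f c k w - iterDslope f c k c‖
        ≤ r⁻¹ * (M * (2/r)^k + M * (2/r)^k) := by
          exact mul_le_mul_of_nonneg_left h1 (by positivity)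
      _ = M * (2/r)^(k+1) := by ring

lemma local_vitali (f : ℕ → ℂ → ℂ) (z₀ : ℂ) (R M : ℝ) (hR : 0 < R)
    (hf : ∀ n, DifferentiableOn ℂ (f n) (ball z₀ R))
    (hbd : ∀ n, ∀ z ∈ ball z₀ R, ‖f n z‖ ≤ M)
    (S : Set ℂ) (hacc : AccPt z₀ (Filter.principal S))
    (hconv : ∀ s ∈ S, ∃ l : ℂ, Tendsto (fun n => f n s) atTop (𝓝 l)) :
    UniformCauchySeqOn f atTop (closedBall z₀ (R/8)) := by
  set r := R/2 with hrdef
  have hr : 0 < r := by positivity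
  have hrR : r < R := by rw [hrdef]; linarith
  have hM : 0 ≤ M := le_trans (norm_nonneg _) (hbd 0 z₀ (mem_ball_self hR))
  set g : ℕ → ℕ → ℂ → ℂ := fun k n => iterDslope (f n) z₀ k with hg
  have hgb : ∀ k n, ∀ z ∈ closedBall z₀ r, ‖g k n z‖ ≤ M * (2/r)^k :=
    fun k n => iterDslope_bound (f n) z₀ R r M hr hrR (hf n) (hbd n) k
  have hstep : ∀ k n z, g k n z = g k n z₀ + (z - z₀) * g (k+1) n z :=
    fun k n z => iterDslope_step (f n) z₀ z k
  have hg0 : ∀ n z, g 0 n z = f n z := fun n z => rfl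
  have hlip : ∀ k n, ∀ z ∈ closedBall z₀ r,
      ‖g k n z - g k n z₀‖ ≤ M * (2/r)^(k+1) * ‖z - z₀‖ := by
    intro k n z hz
    have heq : g k n z - g k n z₀ = (z - z₀) * g (k+1) n z := by
      linear_combination hstep k n z
    rw [heq, norm_mul, mul_comm]
    exact mul_le_mul_of_nonneg_right (hgb (k+1) n z hz) (norm_nonneg _)
  have key : ∀ k, (∀ s ∈ S, s ∈ ball z₀ r → s ≠ z₀ → CauchySeq (fun n => g k n s)) →
      CauchySeq (fun n => g k n z₀) := by
    intro k hS
    rw [Metric.cauchySeq_iff]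
    intro ε hε
    set L := M * (2/r)^(k+1) with hL
    have hL0 : 0 ≤ L := by positivity
    have hδ : 0 < min r (ε/(3*(L+1))) := lt_min hr (by positivity)
    obtain ⟨s, hs1, hs2⟩ := accPt_iff_nhds.mp hacc _ (ball_mem_nhds z₀ hδ)
    obtain ⟨hsball, hsS⟩ := hs1
    have hsr : s ∈ ball z₀ r := ball_subset_ball (min_le_left _ _) hsball
    have hsd : ‖s - z₀‖ < ε/(3*(L+1)) := by
      have h := mem_ball.mp hsball
      rw [dist_eq_norm] at h
      exact h.trans_le (min_le_right _ _)
    have hlips : ∀ n, ‖g k n s - g k n z₀‖ < ε/3 := by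
      intro n
      refine (hlip k n s (ball_subset_closedBall hsr)).trans_lt ?_
      calc L * ‖s - z₀‖ ≤ (L+1) * ‖s - z₀‖ := by nlinarith [norm_nonneg (s - z₀)]
        _ < (L+1) * (ε/(3*(L+1))) := mul_lt_mul_of_pos_left hsd (by positivity)
        _ = ε/3 := by field_simp
    obtain ⟨N, hN⟩ := Metric.cauchySeq_iff.mp (hS s hsS hsr hs2) (ε/3) (by positivity)
    refine ⟨N, fun m hm n hn => ?_⟩
    have h1 := hlips m
    have h2 := hlips n
    have h3 := hN m hm n hn
    rw [dist_eq_norm] at h3 ⊢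
    have h4 : g k m z₀ - g k n z₀ =
        -(g k m s - g k m z₀) + (g k m s - g k n s) + (g k n s - g k n z₀) := by ring
    rw [h4]
    calc ‖-(g k m s - g k m z₀) + (g k m s - g k n s) + (g k n s - g k n z₀)‖
        ≤ ‖-(g k m s - g k m z₀) + (g k m s - g k n s)‖ + ‖g k n s - g k n z₀‖ :=
          norm_add_le _ _
      _ ≤ ‖-(g k m s - g k m z₀)‖ + ‖g k m s - g k n s‖ + ‖g k n s - g k n z₀‖ := by
          linarith [norm_add_le (-(g k m s - g k m z₀)) (g k m s - g k n s)]
      _ < ε/3 + ε/3 + ε/3 := by rw [norm_neg]; exact add_lt_add (add_lt_add h1 h3) h2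
      _ = ε := by ring
  have hcvS : ∀ k, ∀ s ∈ S, s ∈ ball z₀ r → s ≠ z₀ → CauchySeq (fun n => g k n s) := by
    intro k
    induction k with
    | zero =>
      intro s hsS _ _
      obtain ⟨l, hl⟩ := hconv s hsS
      have he : (fun n => g 0 n s) = fun n => f n s := rfl
      rw [he]
      exact hl.cauchySeq
    | succ k ih =>
      intro s hsS hsr hsne
      obtain ⟨l1, hl1⟩ := cauchySeq_tendsto_of_complete (ih s hsS hsr hsne)
      obtain ⟨l2, hl2⟩ := cauchySeq_tendsto_of_complete (key k ih)
      have hne : s - z₀ ≠ 0 := sub_ne_zero.mpr hsne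
      have heq : (fun n => g (k+1) n s) = fun n => (s - z₀)⁻¹ * (g k n s - g k n z₀) := by
        funext n
        rw [inv_mul_eq_div, eq_div_iff hne]
        linear_combination -(hstep k n s)
      rw [heq]
      exact (Tendsto.const_mul _ (hl1.sub hl2)).cauchySeq
  have hkey : ∀ k, CauchySeq (fun n => g k n z₀) := fun k => key k (hcvS k)
  have htel : ∀ K n z, f n z =
      (∑ i ∈ Finset.range K, g i n z₀ * (z - z₀)^i) + g K n z * (z - z₀)^K := by
    intro K n z
    induction K with
    | zero => simpa using (hg0 n z).symm
    | succ K ihK =>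
      rw [Finset.sum_range_succ]
      rw [ihK, hstep K n z]
      ring
  rw [Metric.uniformCauchySeqOn_iff]
  intro ε hε
  obtain ⟨K0, hK0⟩ := exists_pow_lt_of_lt_one (show (0:ℝ) < ε/2/(2*M+1) by positivity)
      (show (1:ℝ)/2 < 1 by norm_num)
  set K := K0 + 1 with hKdef
  have hKpos : 0 < K := Nat.succ_pos _
  have hKR : (0:ℝ) < (K:ℝ) := by exact_mod_cast hKpos
  have hrem : 2 * M * ((1:ℝ)/2)^K < ε/2 := by
    have h1 : ((1:ℝ)/2)^K ≤ (1/2)^K0 :=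
      pow_le_pow_of_le_one (by norm_num) (by norm_num) (Nat.le_succ _)
    have h2 : 2*M*((1:ℝ)/2)^K ≤ (2*M+1) * ((1/2)^K0) := by
      nlinarith [pow_nonneg (show (0:ℝ) ≤ 1/2 by norm_num) K]
    have h3 : (2*M+1) * ((1:ℝ)/2)^K0 < (2*M+1) * (ε/2/(2*M+1)) :=
      mul_lt_mul_of_pos_left hK0 (by positivity)
    have h4 : (2*M+1) * (ε/2/(2*M+1)) = ε/2 := by field_simp
    linarith
  have hNexists : ∀ i : ℕ, ∃ N : ℕ, ∀ m ≥ N, ∀ n ≥ N,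
      dist (g i m z₀) (g i n z₀) < ε/(2*K*((R/8)^i+1)) :=
    fun i => Metric.cauchySeq_iff.mp (hkey i) _ (by positivity)
  choose Nf hNf using hNexists
  refine ⟨(Finset.range K).sup Nf, fun m hm n hn z hz => ?_⟩
  have hz8 : ‖z - z₀‖ ≤ R/8 := by rwa [mem_closedBall, dist_eq_norm] at hz
  have hzr : z ∈ closedBall z₀ r := by
    rw [mem_closedBall, dist_eq_norm]
    have h : R/8 ≤ r := by rw [hrdef]; linarith
    linarith
  have hdiff : f m z - f n z =
      (∑ i ∈ Finset.range K, (g i m z₀ - g i n z₀) * (z - z₀)^i)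
        + (g K m z - g K n z) * (z - z₀)^K := by
    simp only [sub_mul]
    rw [Finset.sum_sub_distrib, htel K m z, htel K n z]
    ring
  rw [dist_eq_norm, hdiff]
  have hterm1 : ‖∑ i ∈ Finset.range K, (g i m z₀ - g i n z₀) * (z - z₀)^i‖ < ε/2 := by
    refine (norm_sum_le _ _).trans_lt ?_
    have hlt : ∀ i ∈ Finset.range K, ‖(g i m z₀ - g i n z₀) * (z - z₀)^i‖ < ε/(2*K) := by
      intro i hi
      rw [norm_mul, norm_pow]
      have hd : ‖g i m z₀ - g i n z₀‖ < ε/(2*K*((R/8)^i+1)) := by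
        have h := hNf i m (le_trans (Finset.le_sup hi) hm) n (le_trans (Finset.le_sup hi) hn)
        rwa [dist_eq_norm] at h
      have hp : ‖z - z₀‖^i ≤ (R/8)^i := pow_le_pow_left₀ (norm_nonneg _) hz8 i
      have hC : (0:ℝ) < (R/8)^i + 1 := by positivity
      calc ‖g i m z₀ - g i n z₀‖ * ‖z - z₀‖^i
          ≤ ‖g i m z₀ - g i n z₀‖ * ((R/8)^i+1) :=
            mul_le_mul_of_nonneg_left (hp.trans (by linarith)) (norm_nonneg _)
        _ < (ε/(2*K*((R/8)^i+1))) * ((R/8)^i+1) := mul_lt_mul_of_pos_right hd hC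
        _ = ε/(2*K) := by field_simp
    calc ∑ i ∈ Finset.range K, ‖(g i m z₀ - g i n z₀) * (z - z₀)^i‖
        < ∑ _i ∈ Finset.range K, ε/(2*K) :=
          Finset.sum_lt_sum_of_nonempty ⟨0, Finset.mem_range.mpr hKpos⟩ hlt
      _ = ε/2 := by
          rw [Finset.sum_const, Finset.card_range, nsmul_eq_mul]
          field_simp
  have hterm2 : ‖(g K m z - g K n z) * (z - z₀)^K‖ ≤ 2*M*((1:ℝ)/2)^K := by
    rw [norm_mul, norm_pow]
    have h1 : ‖g K m z - g K n z‖ ≤ 2 * (M * (2/r)^K) := by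
      have h := norm_sub_le (g K m z) (g K n z)
      linarith [hgb K m z hzr, hgb K n z hzr]
    have h2 : ‖z - z₀‖^K ≤ (R/8)^K := pow_le_pow_left₀ (norm_nonneg _) hz8 K
    have h3 : (2/r)^K * (R/8)^K = ((1:ℝ)/2)^K := by
      rw [← mul_pow]
      congr 1
      rw [hrdef]
      field_simp
      ring
    calc ‖g K m z - g K n z‖ * ‖z - z₀‖^K
        ≤ (2 * (M * (2/r)^K)) * (R/8)^K :=
          mul_le_mul h1 h2 (by positivity) (by positivity)
      _ = 2*M*((2/r)^K * (R/8)^K) := by ring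
      _ = 2*M*((1:ℝ)/2)^K := by rw [h3]
  calc ‖(∑ i ∈ Finset.range K, (g i m z₀ - g i n z₀) * (z - z₀)^i)
        + (g K m z - g K n z) * (z - z₀)^K‖
      ≤ ‖∑ i ∈ Finset.range K, (g i m z₀ - g i n z₀) * (z - z₀)^i‖
        + ‖(g K m z - g K n z) * (z - z₀)^K‖ := norm_add_le _ _
    _ < ε/2 + ε/2 := add_lt_add hterm1 (hterm2.trans_lt hrem)
    _ = ε := by ring

/-- **Vitali's convergence theorem.** -/
theorem vitali_convergence
    (D : Set ℂ) (hD : IsOpen D) (hDconn : IsConnected D)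
    (f : ℕ → ℂ → ℂ) (M : ℝ)
    (hf : ∀ n, DifferentiableOn ℂ (f n) D)
    (hbd : ∀ n, ∀ s ∈ D, ‖f n s‖ ≤ M)
    (S : Set ℂ) (hSD : S ⊆ D)
    (z₀ : ℂ) (hz₀ : z₀ ∈ D) (hacc : AccPt z₀ (Filter.principal S))
    (hconv : ∀ s ∈ S, ∃ l : ℂ, Tendsto (fun n => f n s) atTop (𝓝 l)) :
    ∃ g : ℂ → ℂ, DifferentiableOn ℂ g D ∧
      ∀ (c : ℂ) (r : ℝ), Metric.closedBall c r ⊆ D →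
        TendstoUniformlyOn f g atTop (Metric.closedBall c r) := by
  classical
  set U : Set ℂ := {z | ∃ ε > 0, ball z ε ⊆ D ∧ UniformCauchySeqOn f atTop (ball z ε)} with hU
  have hUconv : ∀ u ∈ U, ∃ l, Tendsto (fun n => f n u) atTop (𝓝 l) := by
    rintro u ⟨ε, hε, hsub, hcauchy⟩
    exact cauchySeq_tendsto_of_complete (hcauchy.cauchySeq (mem_ball_self hε))
  have absorb : ∀ z ∈ D, ∀ T : Set ℂ, AccPt z (Filter.principal T) →
      (∀ s ∈ T, ∃ l, Tendsto (fun n => f n s) atTop (𝓝 l)) → z ∈ U := by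
    intro z hzD T haccT hconvT
    obtain ⟨R, hR, hsub⟩ := Metric.isOpen_iff.mp hD z hzD
    have huc := local_vitali f z R M hR (fun n => (hf n).mono hsub)
        (fun n w hw => hbd n w (hsub hw)) T haccT hconvT
    exact ⟨R/8, by positivity, (ball_subset_ball (by linarith)).trans hsub,
      huc.mono ball_subset_closedBall⟩
  have hUopen : IsOpen U := by
    rw [Metric.isOpen_iff]
    rintro z ⟨ε, hε, hsub, hcauchy⟩
    refine ⟨ε/2, by positivity, fun w hw => ?_⟩
    have hwz : dist w z < ε/2 := mem_ball.mp hw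
    have hball : ball w (ε - dist w z) ⊆ ball z ε := ball_subset_ball' (by linarith)
    exact ⟨ε - dist w z, by linarith [dist_nonneg (x := w) (y := z)], hball.trans hsub,
      hcauchy.mono hball⟩
  have hz₀U : z₀ ∈ U := absorb z₀ hz₀ S hacc hconv
  have hclos : ∀ z ∈ D, z ∈ closure U → z ∈ U := by
    intro z hzD hzc
    refine absorb z hzD U ?_ hUconv
    rw [accPt_iff_nhds]
    intro V hV
    obtain ⟨δ, hδ, hballV⟩ := Metric.mem_nhds_iff.mp hV
    obtain ⟨y, hy⟩ := _root_.mem_closure_iff.mp hzc (ball z δ) isOpen_ball (mem_ball_self hδ)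
    obtain ⟨τ, hτ, hballτ⟩ := Metric.isOpen_iff.mp hUopen y hy.2
    by_cases hyz : y = z
    · subst hyz
      set ρ := min τ δ with hρdef
      have hρ : 0 < ρ := lt_min hτ hδ
      refine ⟨y + ((ρ/2 : ℝ) : ℂ), ⟨hballV ?_, hballτ ?_⟩, ?_⟩
      · rw [mem_ball, dist_eq_norm, add_sub_cancel_left, Complex.norm_real]
        rw [Real.norm_eq_abs, abs_of_pos (by positivity)]
        have := min_le_right τ δ
        linarith
      · rw [mem_ball, dist_eq_norm, add_sub_cancel_left, Complex.norm_real]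
        rw [Real.norm_eq_abs, abs_of_pos (by positivity)]
        have := min_le_left τ δ
        linarith
      · intro h
        have : ((ρ/2 : ℝ) : ℂ) = 0 := by
          have := congrArg (fun w => w - y) h
          simpa using this
        rw [Complex.ofReal_eq_zero] at this
        linarith
    · exact ⟨y, ⟨hballV hy.1, hy.2⟩, hyz⟩
  have hDU : D ⊆ U := by
    intro w hwD
    by_contra hwU
    have h := hDconn.isPreconnected U (closure U)ᶜ hUopen isClosed_closure.isOpen_compl
      (fun x hx => by
        by_cases h : x ∈ closure U
        · exact Or.inl (hclos x hx h)
        · exact Or.inr h)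
      ⟨z₀, hz₀, hz₀U⟩
      ⟨w, hwD, fun hc => hwU (hclos w hwD hc)⟩
    obtain ⟨x, _, hxU, hxc⟩ := h
    exact hxc (subset_closure hxU)
  set g : ℂ → ℂ := fun z => limUnder atTop (fun n => f n z) with hgdef
  have htend : ∀ z ∈ D, Tendsto (fun n => f n z) atTop (𝓝 (g z)) := by
    intro z hz
    obtain ⟨l, hl⟩ := hUconv z (hDU hz)
    have : g z = l := hl.limUnder_eq
    rw [this]
    exact hl
  have hTLU : TendstoLocallyUniformlyOn f g atTop D := by
    intro u hu z hz
    obtain ⟨ε, hε, hsub, hcauchy⟩ := hDU hz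
    have htuo : TendstoUniformlyOn f g atTop (ball z ε) :=
      hcauchy.tendstoUniformlyOn_of_tendsto (fun w hw => htend w (hsub hw))
    exact ⟨ball z ε, mem_nhdsWithin_of_mem_nhds (ball_mem_nhds z hε), htuo u hu⟩
  refine ⟨g, hTLU.differentiableOn (Eventually.of_forall hf) hD, fun c r hsub => ?_⟩
  exact (tendstoLocallyUniformlyOn_iff_forall_isCompact hD).mp hTLU _ hsub
    (isCompact_closedBall c r)
end

section
/- For a sequence of number fields K_i with g_{K_i} → ∞ such that for every prime power q the limit φ_q = lim Φ_q(K_i)/g_{K_i} exists, and for Re s > 1, the limit lim_{i→∞} (log ζ_{K_i}(s))/g_{K_i} exists and equals Σ_q φ_q log(1 - q^{-s})^{-1} = log Π_q (1 - q^{-s})^{-φ_q}, where the sum converges absolutely. -/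
open Filter Topology NumberField

/-- `Φ_q(K)`: the number of prime ideals of `𝒪_K` of norm exactly `q`. -/
noncomputable def PhiQ (K : Type*) [Field K] [NumberField K] (q : ℕ) : ℕ :=
  Nat.card {P : Ideal (𝓞 K) // P.IsPrime ∧ Ideal.absNorm P = q}

/-- `g_K = log √|D_K|`, the genus of the number field `K`. -/
noncomputable def genusNF (K : Type*) [Field K] [NumberField K] : ℝ :=
  Real.log (Real.sqrt |(NumberField.discr K : ℝ)|)

/-- The principal branch of the logarithm of the Euler product:
`log ζ_K(s) = ∑_𝔭 ∑_{m ≥ 1} N𝔭^{-ms}/m`. -/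
noncomputable def logDedekindZeta (K : Type*) [Field K] [NumberField K] (s : ℂ) : ℂ :=
  ∑' (P : {P : Ideal (𝓞 K) // P.IsPrime ∧ P ≠ ⊥}) (m : ℕ),
    (Ideal.absNorm P.1 : ℂ) ^ (-((m : ℂ) + 1) * s) / ((m : ℂ) + 1)

section Aux

variable {K : Type*} [Field K] [NumberField K]

lemma aux_isPrimePow_absNorm {P : Ideal (𝓞 K)} (hP : P.IsPrime) (hb : P ≠ ⊥) :
    IsPrimePow (Ideal.absNorm P) := by
  haveI hmax : P.IsMaximal := Ideal.IsPrime.isMaximal hP hb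
  letI : Field ((𝓞 K) ⧸ P) := Ideal.Quotient.field P
  have hcard : Nat.card ((𝓞 K) ⧸ P) = Ideal.absNorm P := by
    rw [Ideal.absNorm_apply, Submodule.cardQuot_apply]
  have hne : Ideal.absNorm P ≠ 0 := fun h =>
    hb (Ideal.absNorm_eq_zero_iff.mp h)
  haveI : Finite ((𝓞 K) ⧸ P) := (Nat.card_ne_zero.mp (by rw [hcard]; exact hne)).2
  haveI : Fintype ((𝓞 K) ⧸ P) := Fintype.ofFinite _
  obtain ⟨p, _, n, hp, hcard'⟩ := FiniteField.card' ((𝓞 K) ⧸ P)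
  exact ⟨p, n, hp.prime, n.pos, by rw [← hcard, Nat.card_eq_fintype_card, hcard']⟩

lemma aux_card_le (q : ℕ) (hq : 2 ≤ q) :
    PhiQ K q ≤ Module.finrank ℚ K := by
  classical
  have hfin : {P : Ideal (𝓞 K) | P.IsPrime ∧ Ideal.absNorm P = q}.Finite :=
    (Ideal.finite_setOf_absNorm_eq q).subset fun P hP => hP.2
  set T := hfin.toFinset with hT
  have hmemT : ∀ P, P ∈ T ↔ P.IsPrime ∧ Ideal.absNorm P = q := by
    intro P; simp [hT]
  have hcard : PhiQ K q = T.card := by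
    calc PhiQ K q = Nat.card ↥{P : Ideal (𝓞 K) | P.IsPrime ∧ Ideal.absNorm P = q} := rfl
    _ = T.card := by rw [Nat.card_coe_set_eq, Set.ncard_eq_toFinset_card _ hfin]
  have hprime : ∀ P ∈ T, Prime P := by
    intro P hP
    have h := (hmemT P).mp hP
    have hb : P ≠ ⊥ := by
      intro rfl'
      rw [rfl', Ideal.absNorm_eq_zero_iff.mpr rfl] at h
      omega
    exact (Ideal.prime_iff_isPrime hb).mpr h.1
  have hdvd : ∀ P ∈ T, P ∣ Ideal.span {(q : 𝓞 K)} := by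
    intro P hP
    have h := (hmemT P).mp hP
    rw [Ideal.dvd_iff_le, Ideal.span_le, Set.singleton_subset_iff]
    have := Ideal.absNorm_mem P
    rwa [h.2] at this
  have hprod := Finset.prod_primes_dvd (Ideal.span {(q : 𝓞 K)}) hprime hdvd
  have hdvd2 : (q : ℕ) ^ T.card ∣ Ideal.absNorm (Ideal.span {(q : 𝓞 K)}) := by
    have h2 := map_dvd Ideal.absNorm hprod
    rwa [map_prod, Finset.prod_congr rfl (fun P hP => ((hmemT P).mp hP).2),
      Finset.prod_const] at h2
  have hnorm : Ideal.absNorm (Ideal.span {(q : 𝓞 K)}) = q ^ Module.finrank ℚ K := by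
    have hmap : ((q : ℕ) : 𝓞 K) = algebraMap ℤ (𝓞 K) ((q : ℕ) : ℤ) := by
      simp
    rw [Ideal.absNorm_span_singleton, hmap,
      Algebra.norm_algebraMap_of_basis (Module.Free.chooseBasis ℤ (𝓞 K)),
      ← Module.finrank_eq_card_chooseBasisIndex, NumberField.RingOfIntegers.rank]
    rw [Int.natAbs_pow]
    norm_num
  rw [hnorm] at hdvd2
  rw [hcard]
  exact (Nat.pow_dvd_pow_iff_le_right hq).mp hdvd2

lemma aux_deg_le (h1 : 1 ≤ genusNF K) :
    (Module.finrank ℚ K : ℝ) ≤ 5 * genusNF K := by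
  set n := Module.finrank ℚ K with hn
  by_cases hn1 : n ≤ 1
  · have : (n : ℝ) ≤ 1 := by exact_mod_cast hn1
    linarith
  push_neg at hn1
  have hD := NumberField.abs_discr_ge (K := K) hn1
  have h2 : (2 : ℝ) ≤ 3 * Real.pi / 4 := by nlinarith [Real.pi_gt_three]
  have hpow : (2 : ℝ) ^ n ≤ (3 * Real.pi / 4) ^ n := by
    exact pow_le_pow_left₀ (by norm_num) h2 n
  have hD2 : (4 / 9 : ℝ) * 2 ^ n ≤ |(NumberField.discr K : ℝ)| := by
    calc (4 / 9 : ℝ) * 2 ^ n ≤ (4 / 9 : ℝ) * (3 * Real.pi / 4) ^ n := by nlinarith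
    _ ≤ |(NumberField.discr K : ℝ)| := by
        rw [← Int.cast_abs]; exact_mod_cast hD
  have hgenus : genusNF K = Real.log |(NumberField.discr K : ℝ)| / 2 := by
    rw [genusNF, Real.log_sqrt (abs_nonneg _)]
  have hlog : Real.log ((4 / 9 : ℝ) * 2 ^ n) ≤ Real.log |(NumberField.discr K : ℝ)| :=
    Real.log_le_log (by positivity) hD2
  have hlog2 : Real.log ((4 / 9 : ℝ) * 2 ^ n) = Real.log (4 / 9) + n * Real.log 2 := by
    rw [Real.log_mul (by norm_num) (by positivity), Real.log_pow]
  have h49 : -(5 / 4 : ℝ) ≤ Real.log (4 / 9) := by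
    have : Real.log (9 / 4 : ℝ) ≤ 5 / 4 := by
      have := Real.log_le_sub_one_of_pos (x := (9 / 4 : ℝ)) (by norm_num)
      linarith
    have h' : Real.log ((4:ℝ)/9) = -Real.log (9/4) := by
      rw [show ((4:ℝ)/9) = ((9:ℝ)/4)⁻¹ by norm_num, Real.log_inv]
    linarith
  have hl2 := Real.log_two_gt_d9
  have hnr : (2 : ℝ) ≤ (n : ℝ) := by exact_mod_cast hn1
  nlinarith [hlog, h1]

lemma aux_norm_cpow {q : ℕ} (hq : 2 ≤ q) (s : ℂ) :
    ‖(q : ℂ) ^ (-s)‖ = (q : ℝ) ^ (-s.re) := by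
  rw [Complex.norm_natCast_cpow_of_pos (by omega), Complex.neg_re]

lemma aux_norm_lt_one {q : ℕ} (hq : 2 ≤ q) {s : ℂ} (hs : 1 < s.re) :
    ‖(q : ℂ) ^ (-s)‖ < 1 := by
  rw [aux_norm_cpow hq]
  exact Real.rpow_lt_one_of_one_lt_of_neg (by exact_mod_cast hq.trans_lt' one_lt_two) (by linarith)

lemma aux_norm_le_half {q : ℕ} (hq : 2 ≤ q) {s : ℂ} (hs : 1 < s.re) :
    ‖(q : ℂ) ^ (-s)‖ ≤ 1 / 2 := by
  rw [aux_norm_cpow hq]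
  have hq1 : (1 : ℝ) ≤ (q : ℝ) := by exact_mod_cast hq.trans' one_le_two
  calc (q : ℝ) ^ (-s.re) ≤ (q : ℝ) ^ (-1 : ℝ) :=
        Real.rpow_le_rpow_of_exponent_le hq1 (by linarith)
  _ = ((q : ℝ))⁻¹ := Real.rpow_neg_one _
  _ ≤ 1 / 2 := by
      rw [one_div]
      exact inv_anti₀ (by norm_num) (by exact_mod_cast hq)

lemma aux_logterm_zero {q : ℕ} (hq : q < 2) {s : ℂ} (hs : 1 < s.re) :
    Complex.log (1 - (q : ℂ) ^ (-s)) = 0 := by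
  have hsne : -s ≠ 0 := by
    intro h
    have : s = 0 := by simpa using congrArg Neg.neg h
    rw [this] at hs; simp at hs; linarith
  interval_cases q
  · rw [Nat.cast_zero, Complex.zero_cpow hsne]
    simp
  · rw [Nat.cast_one, Complex.one_cpow]
    simp [Complex.log_zero]

lemma aux_logterm_bound (q : ℕ) {s : ℂ} (hs : 1 < s.re) :
    ‖Complex.log (1 - (q : ℂ) ^ (-s))‖ ≤ 2 * (q : ℝ) ^ (-s.re) := by
  rcases lt_or_ge q 2 with h | h
  · rw [aux_logterm_zero h hs]
    simp only [norm_zero]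
    positivity
  · have hz := aux_norm_le_half h hs
    have hb := Complex.norm_log_one_add_half_le_self (z := -((q : ℂ) ^ (-s)))
      (by rwa [norm_neg])
    rw [show (1 : ℂ) + -((q : ℂ) ^ (-s)) = 1 - (q : ℂ) ^ (-s) by ring, norm_neg,
      aux_norm_cpow h] at hb
    have : (0:ℝ) ≤ (q : ℝ) ^ (-s.re) := by positivity
    linarith

variable (K) in
lemma aux_hasSum (s : ℂ) (hs : 1 < s.re) :
    HasSum (fun q : ℕ => (PhiQ K q : ℂ) * (-Complex.log (1 - (q : ℂ) ^ (-s))))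
      (logDedekindZeta K s) := by
  classical
  let PT := {P : Ideal (𝓞 K) // P.IsPrime ∧ P ≠ ⊥}
  let N : PT → ℕ := fun P => Ideal.absNorm P.1
  have hN2 : ∀ P : PT, 2 ≤ N P := fun P => (aux_isPrimePow_absNorm P.2.1 P.2.2).two_le
  let G : PT → ℂ := fun P => -Complex.log (1 - ((N P : ℕ) : ℂ) ^ (-s))
  -- fibers are finite
  have hfinfib : ∀ q : ℕ, Finite {P : PT // N P = q} := by
    intro q
    haveI : Finite ({I : Ideal (𝓞 K) | Ideal.absNorm I = q} : Set _) :=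
      (Ideal.finite_setOf_absNorm_eq q).to_subtype
    exact Finite.of_injective
      (fun P => (⟨P.1.1, P.2⟩ : ({I : Ideal (𝓞 K) | Ideal.absNorm I = q} : Set _)))
      (fun a b h => by
        apply Subtype.ext; apply Subtype.ext
        simpa [Subtype.ext_iff] using h)
  -- fiber cardinality equals PhiQ for q ≥ 1
  have hfibcard : ∀ q : ℕ, 1 ≤ q → Nat.card {P : PT // N P = q} = PhiQ K q := by
    intro q hq
    refine Nat.card_congr ?_
    refine
      { toFun := fun P => ⟨P.1.1, P.1.2.1, P.2⟩
        invFun := fun P => ⟨⟨P.1, P.2.1, fun hb => by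
          have h2 := P.2.2
          rw [hb, Ideal.absNorm_eq_zero_iff.mpr rfl] at h2
          omega⟩, P.2.2⟩
        left_inv := fun P => rfl
        right_inv := fun P => rfl }
  -- the inner geometric sums
  have hstep1 : ∀ P : PT,
      HasSum (fun m : ℕ => (Ideal.absNorm P.1 : ℂ) ^ (-((m : ℂ) + 1) * s) / ((m : ℂ) + 1))
        (G P) := by
    intro P
    set z : ℂ := ((N P : ℕ) : ℂ) ^ (-s) with hz
    have hzlt : ‖z‖ < 1 := aux_norm_lt_one (hN2 P) hs
    have h := Complex.hasSum_taylorSeries_neg_log hzlt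
    have h1 : HasSum (fun m : ℕ => z ^ (m + 1) / (((m + 1 : ℕ)) : ℂ))
        (-Complex.log (1 - z)) := by
      have h2 := (hasSum_nat_add_iff' (f := fun n : ℕ => z ^ n / (n : ℂ)) 1).mpr h
      simpa using h2
    have key : ∀ m : ℕ, (Ideal.absNorm P.1 : ℂ) ^ (-((m : ℂ) + 1) * s) / ((m : ℂ) + 1)
        = z ^ (m + 1) / (((m + 1 : ℕ)) : ℂ) := by
      intro m
      have he : (-((m : ℂ) + 1) * s) = (-s) * (((m + 1 : ℕ)) : ℂ) := by push_cast; ring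
      rw [he, Complex.cpow_mul_nat]
      push_cast
      ring_nf
      rw [hz]
      ring
    simp only [key]
    exact h1
  -- summability of norms of G, fiberwise
  have hBsum : Summable (fun q : ℕ => (Module.finrank ℚ K : ℝ) * (2 * (q : ℝ) ^ (-s.re))) := by
    refine Summable.mul_left _ (Summable.mul_left _ ?_)
    exact Real.summable_nat_rpow.mpr (by linarith)
  have hGnormsum : Summable (fun P : PT => ‖G P‖) := by
    refine (Equiv.summable_iff (Equiv.sigmaFiberEquiv N)).mp ?_
    show Summable (fun x : (Σ q : ℕ, {P : PT // N P = q}) => ‖G x.2.1‖)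
    refine (summable_sigma_of_nonneg (fun _ => norm_nonneg _)).mpr ⟨?_, ?_⟩
    · intro q
      haveI := hfinfib q
      exact Summable.of_finite
    · have heval : ∀ q : ℕ, (∑' P : {P : PT // N P = q}, ‖G P.1‖)
          = Nat.card {P : PT // N P = q} • ‖Complex.log (1 - (q : ℂ) ^ (-s))‖ := by
        intro q
        rw [show (fun P : {P : PT // N P = q} => ‖G P.1‖)
            = fun _ => ‖Complex.log (1 - (q : ℂ) ^ (-s))‖ from
          funext fun P => by simp only [G, norm_neg, P.2]]
        exact tsum_const _
      refine Summable.of_nonneg_of_le (fun q => ?_) (fun q => ?_) hBsum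
      · simpa [Equiv.sigmaFiberEquiv] using
          tsum_nonneg (fun P : {P : PT // N P = q} => norm_nonneg (G P.1))
      · show (∑' P : {P : PT // N P = q}, ‖G P.1‖) ≤ _
        rw [heval q, nsmul_eq_mul]
        rcases lt_or_ge q 2 with h | h
        · rw [aux_logterm_zero h hs]
          simp only [norm_zero, mul_zero]
          positivity
        · have hc : (Nat.card {P : PT // N P = q} : ℝ) ≤ (Module.finrank ℚ K : ℝ) := by
            rw [hfibcard q (by omega)]
            exact_mod_cast aux_card_le q h
          have hl := aux_logterm_bound q hs
          have h0 : (0:ℝ) ≤ ‖Complex.log (1 - (q : ℂ) ^ (-s))‖ := norm_nonneg _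
          nlinarith [Nat.cast_nonneg (α := ℝ) (Nat.card {P : PT // N P = q})]
  have hGsum : Summable G := hGnormsum.of_norm
  have hL : logDedekindZeta K s = ∑' P : PT, G P :=
    tsum_congr fun P => (hstep1 P).tsum_eq
  have hfiber := hGsum.hasSum.tsum_fiberwise N
  rw [← hL] at hfiber
  refine hfiber.congr_fun fun q => ?_
  have hcongr : Nat.card ↥(N ⁻¹' {q}) = Nat.card {P : PT // N P = q} :=
    Nat.card_congr (Equiv.subtypeEquivRight fun P => by simp)
  have heq : (∑' P : ↥(N ⁻¹' {q}), G P.1)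
      = Nat.card ↥(N ⁻¹' {q}) • (-Complex.log (1 - (q : ℂ) ^ (-s))) := by
    rw [show (fun P : ↥(N ⁻¹' {q}) => G P.1)
        = fun _ => -Complex.log (1 - (q : ℂ) ^ (-s)) from
      funext fun P => by
        have h2 : N P.1 = q := P.2
        simp only [G, h2]]
    exact tsum_const _
  rw [heq, hcongr, nsmul_eq_mul]
  rcases Nat.eq_zero_or_pos q with rfl | hq
  · rw [aux_logterm_zero (by norm_num) hs]
    simp
  · rw [hfibcard q hq]

lemma aux_phiQ_eq_zero {q : ℕ} (hq : 2 ≤ q) (h : ¬ IsPrimePow q) : PhiQ K q = 0 := by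
  rw [PhiQ]
  haveI : IsEmpty {P : Ideal (𝓞 K) // P.IsPrime ∧ Ideal.absNorm P = q} := by
    refine ⟨fun P => h ?_⟩
    have hb : P.1 ≠ ⊥ := by
      intro hb
      have h2 := P.2.2
      rw [hb, Ideal.absNorm_eq_zero_iff.mpr rfl] at h2
      omega
    have := aux_isPrimePow_absNorm P.2.1 hb
    rwa [P.2.2] at this
  exact Nat.card_of_isEmpty

end Aux

/-- For an asymptotically exact family of number fields and `Re s > 1`,
`(log ζ_{K_i}(s))/g_{K_i}` converges to
`∑_q φ_q log (1-q^{-s})^{-1} = log ∏_q (1-q^{-s})^{-φ_q}`,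
the sum being absolutely convergent. -/
theorem log_zeta_limit_re_gt_one
    (K : ℕ → Type) [∀ i, Field (K i)] [∀ i, NumberField (K i)]
    (hg : Tendsto (fun i => genusNF (K i)) atTop atTop)
    (φ : ℕ → ℝ) (hφ0 : ∀ q, ¬ IsPrimePow q → φ q = 0)
    (hφ : ∀ q, IsPrimePow q →
      Tendsto (fun i => (PhiQ (K i) q : ℝ) / genusNF (K i)) atTop (𝓝 (φ q))) :
    ∀ s : ℂ, 1 < s.re →
      Summable (fun q : ℕ => ‖(φ q : ℂ) * Complex.log (1 - (q : ℂ) ^ (-s))‖) ∧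
      Tendsto (fun i => logDedekindZeta (K i) s / (genusNF (K i) : ℂ)) atTop
        (𝓝 (∑' q : ℕ, (φ q : ℂ) * (-Complex.log (1 - (q : ℂ) ^ (-s))))) := by
  intro s hs
  have hge1 : ∀ᶠ i in atTop, 1 ≤ genusNF (K i) := hg.eventually_ge_atTop 1
  -- uniform bound on the coefficients
  have hcoef : ∀ᶠ i in atTop, ∀ q : ℕ, 2 ≤ q → (PhiQ (K i) q : ℝ) ≤ 5 * genusNF (K i) := by
    filter_upwards [hge1] with i hi
    intro q hq
    calc (PhiQ (K i) q : ℝ) ≤ (Module.finrank ℚ (K i) : ℝ) := by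
          exact_mod_cast aux_card_le q hq
    _ ≤ 5 * genusNF (K i) := aux_deg_le hi
  -- bound on φ
  have hφle : ∀ q : ℕ, |φ q| ≤ 5 := by
    intro q
    by_cases hq : IsPrimePow q
    · have hq2 : 2 ≤ q := hq.two_le
      have h0 : 0 ≤ φ q := by
        refine ge_of_tendsto (hφ q hq) ?_
        filter_upwards [hge1] with i hi
        positivity
      have h5 : φ q ≤ 5 := by
        refine le_of_tendsto (hφ q hq) ?_
        filter_upwards [hge1, hcoef] with i hi hci
        rw [div_le_iff₀ (by linarith)]
        calc (PhiQ (K i) q : ℝ) ≤ 5 * genusNF (K i) := hci q hq2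
        _ = 5 * genusNF (K i) := rfl
      rw [abs_of_nonneg h0]; exact h5
    · rw [hφ0 q hq]; norm_num
  have hBsum : Summable (fun q : ℕ => (10 : ℝ) * (q : ℝ) ^ (-s.re)) :=
    Summable.mul_left _ (Real.summable_nat_rpow.mpr (by linarith))
  constructor
  · refine Summable.of_nonneg_of_le (fun q => norm_nonneg _) (fun q => ?_) hBsum
    rw [norm_mul, Complex.norm_real]
    calc |φ q| * ‖Complex.log (1 - (q : ℂ) ^ (-s))‖
        ≤ 5 * (2 * (q : ℝ) ^ (-s.re)) := by
          have := aux_logterm_bound q hs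
          have h0 : (0:ℝ) ≤ ‖Complex.log (1 - (q : ℂ) ^ (-s))‖ := norm_nonneg _
          nlinarith [abs_nonneg (φ q), hφle q]
    _ = 10 * (q : ℝ) ^ (-s.re) := by ring
  · have hkey : (fun i => logDedekindZeta (K i) s / (genusNF (K i) : ℂ))
        = fun i => ∑' q : ℕ,
            (PhiQ (K i) q : ℂ) * (-Complex.log (1 - (q : ℂ) ^ (-s))) / (genusNF (K i) : ℂ) := by
      funext i
      exact (((aux_hasSum (K i) s hs).div_const _).tsum_eq).symm
    rw [hkey]
    refine tendsto_tsum_of_dominated_convergence hBsum (fun q => ?_) ?_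
    · -- pointwise limits
      rcases lt_or_ge q 2 with h | h
      · rw [aux_logterm_zero h hs]
        simp only [neg_zero, mul_zero, zero_div]
        exact tendsto_const_nhds
      · by_cases hq : IsPrimePow q
        · have hcast : ∀ i, (PhiQ (K i) q : ℂ) * (-Complex.log (1 - (q : ℂ) ^ (-s)))
              / (genusNF (K i) : ℂ)
              = (((PhiQ (K i) q : ℝ) / genusNF (K i) : ℝ) : ℂ)
                * (-Complex.log (1 - (q : ℂ) ^ (-s))) := by
            intro i
            push_cast
            ring
          simp only [hcast]
          exact (((Complex.continuous_ofReal.tendsto _).comp (hφ q hq)).mul_const _)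
        · have h0 : ∀ i, PhiQ (K i) q = 0 := fun i => aux_phiQ_eq_zero h hq
          simp only [h0, hφ0 q hq, Nat.cast_zero, zero_mul, zero_div, Complex.ofReal_zero]
          exact tendsto_const_nhds
    · -- uniform bound
      filter_upwards [hge1, hcoef] with i hi hci
      intro q
      have hgpos : (0:ℝ) < genusNF (K i) := by linarith
      rw [norm_div, norm_mul, norm_neg, Complex.norm_real, Complex.norm_natCast,
        Real.norm_eq_abs, abs_of_pos hgpos]
      rcases lt_or_ge q 2 with h | h
      · rw [aux_logterm_zero h hs]
        simp only [norm_zero, mul_zero, zero_div]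
        positivity
      · rw [div_le_iff₀ hgpos]
        have h1 := hci q h
        have h2 := aux_logterm_bound q hs
        have h3 : (0:ℝ) ≤ (q : ℝ) ^ (-s.re) := by positivity
        nlinarith [Nat.cast_nonneg (α := ℝ) (PhiQ (K i) q), norm_nonneg
          (Complex.log (1 - (q : ℂ) ^ (-s)))]
end
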